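/- The class F of finite fans with epimorphisms has the joint projection property and the amalgamation property: (JPP) for any finite fans A, B there exist a finite fan C and epimorphisms from C onto A and from C onto B; (AP) for any finite fans A, B₁, B₂ and epimorphisms φ₁: B₁ → A and φ₂: B₂ → A, there exist a finite fan C and epimorphisms ψ₁: C → B₁ and ψ₂: C → B₂ such that φ₁ ∘ ψ₁ = φ₂ ∘ ψ₂. -/

import Mathlib

/-- A finite fan: a finite poset with a least element (the root) such that the
set of predecessors of any element is linearly ordered, and the set of successors
of any non-root element is linearly ordered. -/
structure FiniteFan where
  carrier : Type
  fintype : Fintype carrier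
  ord : PartialOrder carrier
  root : carrier
  root_le : ∀ a : carrier, ord.le root a
  down_chain : ∀ a x y : carrier, ord.le x a → ord.le y a → ord.le x y ∨ ord.le y x
  up_chain : ∀ a : carrier, a ≠ root →
    ∀ x y : carrier, ord.le a x → ord.le a y → ord.le x y ∨ ord.le y x

attribute [instance] FiniteFan.fintype

/-- `t` is an immediate successor of `s` in the fan `A`. -/
def FiniteFan.covby (A : FiniteFan) (s t : A.carrier) : Prop :=
  A.ord.lt s t ∧ ∀ p : A.carrier, A.ord.lt s p → ¬ A.ord.lt p t

/-- The relation `R^A` : `R^A(s,t)` iff `s = t` or `t` is an immediate successor of `s`. -/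
def FiniteFan.R (A : FiniteFan) (s t : A.carrier) : Prop :=
  s = t ∨ A.covby s t

/-- An epimorphism of finite fans: a surjection with `R^B(s,t) → R^A(φ s, φ t)`. -/
def FanEpi (B A : FiniteFan) (φ : B.carrier → A.carrier) : Prop :=
  Function.Surjective φ ∧ ∀ s t : B.carrier, B.R s t → A.R (φ s) (φ t)

/-- A downwards closed subset of a finite fan. -/
def FiniteFan.DownClosed (A : FiniteFan) (C : Set A.carrier) : Prop :=
  ∀ x y : A.carrier, A.ord.le x y → y ∈ C → x ∈ C

/-- A downwards closed maximal chain on a finite fan: a family of downwards closed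
subsets linearly ordered by inclusion, maximal among such families. -/
def DCMaxChain (A : FiniteFan) (𝒞 : Set (Set A.carrier)) : Prop :=
  (∀ C ∈ 𝒞, A.DownClosed C) ∧ IsChain (· ⊆ ·) 𝒞 ∧
  ∀ C : Set A.carrier, A.DownClosed C → IsChain (· ⊆ ·) (insert C 𝒞) → C ∈ 𝒞

/-- An epimorphism in the class `F_c`: a fan epimorphism mapping the chain onto the chain. -/
def FcEpi (B A : FiniteFan) (𝒞B : Set (Set B.carrier)) (𝒞A : Set (Set A.carrier))
    (φ : B.carrier → A.carrier) : Prop :=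
  FanEpi B A φ ∧ (Set.image φ) '' 𝒞B = 𝒞A

/-- A branch of a fan: a maximal linearly ordered subset. -/
def FiniteFan.IsBranch (A : FiniteFan) (b : Set A.carrier) : Prop :=
  IsChain A.ord.le b ∧ ∀ b' : Set A.carrier, IsChain A.ord.le b' → b ⊆ b' → b' = b

/-- The height of a finite fan: the maximal `n` such that some branch has `n+1` elements. -/
noncomputable def FiniteFan.height (A : FiniteFan) : ℕ :=
  sSup {n : ℕ | ∃ b : Set A.carrier, A.IsBranch b ∧ b.ncard = n + 1}

/-- The width of a finite fan: the number of its branches. -/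
noncomputable def FiniteFan.width (A : FiniteFan) : ℕ :=
  {b : Set A.carrier | A.IsBranch b}.ncard

/-- A chain on a finite fan is canonical if there is an enumeration `b₁,…,bₙ` of the
branches such that whenever `C` is in the chain and `C ∩ b_j ≠ ∅`, then `b_i ⊆ C`
for all `i < j`. -/
def Canonical (A : FiniteFan) (𝒞 : Set (Set A.carrier)) : Prop :=
  ∃ (n : ℕ) (b : Fin n → Set A.carrier),
    (∀ i, A.IsBranch (b i)) ∧ Function.Injective b ∧
    (∀ b' : Set A.carrier, A.IsBranch b' → ∃ i, b' = b i) ∧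
    ∀ C ∈ 𝒞, ∀ i j : Fin n, i < j → (C ∩ b j).Nonempty → b i ⊆ C

/-- Membership in the class `F_cc`: a downwards closed maximal chain which is canonical,
on a fan all of whose branches have the same height. -/
def Fcc (A : FiniteFan) (𝒞 : Set (Set A.carrier)) : Prop :=
  DCMaxChain A 𝒞 ∧ Canonical A 𝒞 ∧ ∃ k : ℕ, ∀ b : Set A.carrier, A.IsBranch b → b.ncard = k + 1

-- AUX START
open Classical

lemma FiniteFan.R_le {A : FiniteFan} {s t : A.carrier} (h : A.R s t) : A.ord.le s t := by
  rcases h with rfl | h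
  · exact A.ord.le_refl s
  · letI := A.ord; exact le_of_lt h.1

lemma FiniteFan.R_refl (A : FiniteFan) (s : A.carrier) : A.R s s := Or.inl rfl

/-- x < y implies there is a cover of x below y. -/
lemma exists_covby_le {A : FiniteFan} {x y : A.carrier} (h : A.ord.lt x y) :
    ∃ z, A.covby x z ∧ A.ord.le z y := by
  letI := A.ord
  have hfin : Finite A.carrier := Finite.of_fintype _
  have hwf : WellFoundedLT A.carrier := Finite.to_wellFoundedLT
  set S : Set A.carrier := {z | x < z ∧ z ≤ y} with hS
  have hne : S.Nonempty := ⟨y, h, le_refl y⟩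
  obtain ⟨z, hz, hmin⟩ := hwf.wf.has_min S hne
  refine ⟨z, ⟨hz.1, ?_⟩, hz.2⟩
  intro p hxp hpz
  exact hmin p ⟨hxp, le_of_lt (lt_of_lt_of_le hpz hz.2)⟩ hpz

/-- Epimorphisms are monotone. -/
lemma FanEpi.mono {B A : FiniteFan} {φ : B.carrier → A.carrier} (h : FanEpi B A φ)
    {x y : B.carrier} (hxy : B.ord.le x y) : A.ord.le (φ x) (φ y) := by
  letI := B.ord
  letI := A.ord
  have main : ∀ n : ℕ, ∀ x y : B.carrier, {z : B.carrier | x < z ∧ z ≤ y}.ncard = n →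
      x ≤ y → φ x ≤ φ y := by
    intro n
    induction n using Nat.strong_induction_on with
    | _ n ih =>
      intro x y hcard hxy
      rcases eq_or_lt_of_le hxy with rfl | hlt
      · exact le_refl _
      obtain ⟨z, hcov, hzy⟩ := exists_covby_le hlt
      have h1 : φ x ≤ φ z := (A.R_le (h.2 x z (Or.inr hcov)))
      have hsub : {w : B.carrier | z < w ∧ w ≤ y} ⊂ {w : B.carrier | x < w ∧ w ≤ y} := by
        constructor
        · intro w hw
          exact ⟨lt_trans hcov.1 hw.1, hw.2⟩
        · intro hss
          have : z ∈ {w : B.carrier | z < w ∧ w ≤ y} := hss ⟨hcov.1, hzy⟩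
          exact absurd this.1 (lt_irrefl z)
      have hlt' : {w : B.carrier | z < w ∧ w ≤ y}.ncard < n := by
        rw [← hcard]
        exact Set.ncard_lt_ncard hsub (Set.toFinite _)
      exact le_trans h1 (ih _ hlt' z y rfl hzy)
  exact main _ x y rfl hxy

lemma FanEpi.root {B A : FiniteFan} {φ : B.carrier → A.carrier} (h : FanEpi B A φ) :
    φ B.root = A.root := by
  letI := A.ord
  obtain ⟨b, hb⟩ := h.1 A.root
  have h1 : φ B.root ≤ φ b := h.mono (B.root_le b)
  rw [hb] at h1
  exact le_antisymm h1 (A.root_le _)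

def Walk (B : FiniteFan) (w : ℕ → B.carrier) : Prop :=
  w 0 = B.root ∧ ∀ i, B.R (w i) (w (i+1))

/-- There is a walk from the root to any element, constant once it reaches it. -/
lemma chain_walk (B : FiniteFan) (b : B.carrier) :
    ∃ (u : ℕ → B.carrier) (m : ℕ), Walk B u ∧ (∀ i, B.ord.le (u i) b) ∧
      (∀ i, m ≤ i → u i = b) := by
  letI := B.ord
  set u : ℕ → B.carrier := fun n => Nat.rec B.root
    (fun _ prev => if h : prev = b then b
      else if h2 : prev < b then Classical.choose (exists_covby_le h2) else prev) n with hu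
  have hu0 : u 0 = B.root := rfl
  have hstep : ∀ i, u (i+1) = (if h : u i = b then b
      else if h2 : u i < b then Classical.choose (exists_covby_le h2) else u i) := fun i => rfl
  have hle : ∀ i, u i ≤ b := by
    intro i
    induction i with
    | zero => exact B.root_le b
    | succ i ihi =>
      rw [hstep]
      split
      · exact le_refl b
      · rename_i hne
        have h2 : u i < b := lt_of_le_of_ne ihi hne
        rw [dif_pos h2]
        exact (Classical.choose_spec (exists_covby_le h2)).2
  have hR : ∀ i, B.R (u i) (u (i+1)) := by
    intro i
    rw [hstep]
    split
    · rename_i he; rw [he]; exact B.R_refl b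
    · rename_i hne
      have h2 : u i < b := lt_of_le_of_ne (hle i) hne
      rw [dif_pos h2]
      exact Or.inr (Classical.choose_spec (exists_covby_le h2)).1
  -- once it reaches b it stays
  have hstay : ∀ i, u i = b → u (i+1) = b := by
    intro i hi; rw [hstep, dif_pos hi]
  have hstay' : ∀ i j, i ≤ j → u i = b → u j = b := by
    intro i j hij hi
    induction j with
    | zero => exact Nat.le_zero.mp hij ▸ hi
    | succ j ihj =>
      rcases Nat.lt_or_ge i (j+1) with hlt | hge
      · exact hstay j (ihj (Nat.lt_succ_iff.mp hlt))
      · have : i = j + 1 := le_antisymm hij hge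
        rw [← this]; exact hi
  -- it reaches b within card steps
  have hgrow : ∀ i, u i = b ∨ i + 1 ≤ {x : B.carrier | x ≤ u i}.ncard := by
    intro i
    induction i with
    | zero => exact Or.inr (by
        have : B.root ∈ {x : B.carrier | x ≤ u 0} := by rw [hu0]; exact le_refl _
        have hne : ({x : B.carrier | x ≤ u 0}).Nonempty := ⟨_, this⟩
        have := hne.ncard_pos (Set.toFinite _)
        omega)
    | succ i ihi =>
      rcases ihi with hib | hcard
      · exact Or.inl (hstay i hib)
      rcases eq_or_ne (u i) b with hib | hne
      · exact Or.inl (hstay i hib)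
      have h2 : u i < b := lt_of_le_of_ne (hle i) hne
      have hcov : B.covby (u i) (u (i+1)) := by
        rw [hstep, dif_neg hne, dif_pos h2]
        exact (Classical.choose_spec (exists_covby_le h2)).1
      right
      have hsub : {x : B.carrier | x ≤ u i} ⊂ {x : B.carrier | x ≤ u (i+1)} := by
        constructor
        · intro w hw; exact le_trans hw (le_of_lt hcov.1)
        · intro hss
          have := hss (le_refl (u (i+1)))
          exact absurd (lt_of_lt_of_le hcov.1 this) (lt_irrefl _)
      have := Set.ncard_lt_ncard hsub (Set.toFinite _)
      omega
  have hreach : u (Fintype.card B.carrier) = b := by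
    rcases hgrow (Fintype.card B.carrier) with h | h
    · exact h
    · exfalso
      have hle' : {x : B.carrier | x ≤ u (Fintype.card B.carrier)}.ncard ≤ Fintype.card B.carrier := by
        have := Set.ncard_le_ncard (Set.subset_univ {x : B.carrier | x ≤ u (Fintype.card B.carrier)}) (Set.toFinite _)
        simpa [Set.ncard_univ, Nat.card_eq_fintype_card] using this
      omega
  exact ⟨u, Fintype.card B.carrier, ⟨hu0, hR⟩, hle, fun i hi => hstay' _ _ hi hreach⟩

/-- In a fan, covers of a point below a common upper bound are unique. -/
lemma cover_unique {A : FiniteFan} {c z₁ z₂ top : A.carrier}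
    (h1 : A.covby c z₁) (h2 : A.covby c z₂)
    (l1 : A.ord.le z₁ top) (l2 : A.ord.le z₂ top) : z₁ = z₂ := by
  letI := A.ord
  rcases A.down_chain top z₁ z₂ l1 l2 with h | h
  · rcases eq_or_lt_of_le h with he | hlt
    · exact he
    · exact absurd hlt (h2.2 z₁ h1.1)
  · rcases eq_or_lt_of_le h with he | hlt
    · exact he.symm
    · exact absurd hlt (h1.2 z₂ h2.1)

/-- Synchronized walks: walks in B₁ and B₂ with equal images in A, with the
B₁-walk eventually reaching a prescribed element. -/
lemma sync (A B₁ B₂ : FiniteFan) (φ₁ : B₁.carrier → A.carrier) (φ₂ : B₂.carrier → A.carrier)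
    (h₁ : FanEpi B₁ A φ₁) (h₂ : FanEpi B₂ A φ₂) (b₁ : B₁.carrier) :
    ∃ (w₁ : ℕ → B₁.carrier) (w₂ : ℕ → B₂.carrier) (n : ℕ),
      Walk B₁ w₁ ∧ Walk B₂ w₂ ∧ (∀ i, φ₁ (w₁ i) = φ₂ (w₂ i)) ∧
      ∀ m, n ≤ m → w₁ m = b₁ := by
  letI := A.ord
  obtain ⟨u₁, m₁, hu₁, hu₁le, hu₁top⟩ := chain_walk B₁ b₁
  obtain ⟨b₂, hb₂⟩ := h₂.1 (φ₁ b₁)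
  obtain ⟨u₂, m₂, hu₂, hu₂le, hu₂top⟩ := chain_walk B₂ b₂
  set top := φ₁ b₁ with htop
  set d₁ : ℕ → A.carrier := fun i => φ₁ (u₁ i) with hd₁
  set d₂ : ℕ → A.carrier := fun i => φ₂ (u₂ i) with hd₂
  have hd₁le : ∀ i, d₁ i ≤ top := fun i => h₁.mono (hu₁le i)
  have hd₂le : ∀ i, d₂ i ≤ top := fun i => by
    have := h₂.mono (hu₂le i); rwa [hb₂] at this
  have hd₂top : ∀ i, m₂ ≤ i → d₂ i = top := fun i hi => by
    simp only [hd₂, hu₂top i hi, hb₂]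
  have hd₁R : ∀ i, A.R (d₁ i) (d₁ (i+1)) := fun i => h₁.2 _ _ (hu₁.2 i)
  have hd₂R : ∀ i, A.R (d₂ i) (d₂ (i+1)) := fun i => h₂.2 _ _ (hu₂.2 i)
  -- the interleaving step function
  set f : ℕ × ℕ → ℕ × ℕ := fun pq =>
    if pq.2 < m₂ ∧ d₂ (pq.2 + 1) = d₂ pq.2 then (pq.1, pq.2 + 1)
    else if d₁ (pq.1 + 1) = d₁ pq.1 then (pq.1 + 1, pq.2)
    else (pq.1 + 1, pq.2 + 1) with hf
  have hfstep : ∀ r : ℕ × ℕ, d₁ r.1 = d₂ r.2 →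
      ((f r).1 = r.1 ∨ (f r).1 = r.1 + 1) ∧
      ((f r).2 = r.2 ∨ (f r).2 = r.2 + 1) ∧
      d₁ (f r).1 = d₂ (f r).2 ∧
      r.1 + r.2 < (f r).1 + (f r).2 ∧
      ((f r).2 = r.2 + 1 → r.2 < m₂) := by
    rintro ⟨p, q⟩ hpq
    simp only at hpq
    by_cases hA : q < m₂ ∧ d₂ (q + 1) = d₂ q
    · have hfv : f (p,q) = (p, q+1) := by simp only [hf]; rw [if_pos hA]
      rw [hfv]
      refine ⟨Or.inl rfl, Or.inr rfl, ?_, by omega, fun _ => hA.1⟩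
      simp only []
      rw [hA.2]; exact hpq
    · by_cases hB : d₁ (p + 1) = d₁ p
      · have hfv : f (p,q) = (p+1, q) := by
          simp only [hf]; rw [if_neg hA, if_pos hB]
        rw [hfv]
        refine ⟨Or.inr rfl, Or.inl rfl, ?_, by omega, fun h => absurd h (by omega)⟩
        simp only []
        rw [hB]; exact hpq
      · have hfv : f (p,q) = (p+1, q+1) := by
          simp only [hf]; rw [if_neg hA, if_neg hB]
        have hcov1 : A.covby (d₁ p) (d₁ (p+1)) := by
          rcases hd₁R p with h | h
          · exact absurd h.symm hB
          · exact h
        have hq : q < m₂ := by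
          by_contra hq
          push_neg at hq
          have hdq : d₂ q = top := hd₂top q hq
          have hle2 : d₁ (p+1) ≤ top := hd₁le (p+1)
          rw [← hdq, ← hpq] at hle2
          exact absurd (lt_of_lt_of_le hcov1.1 hle2) (lt_irrefl _)
        have hC : d₂ (q+1) ≠ d₂ q := fun h => hA ⟨hq, h⟩
        have hcov2 : A.covby (d₂ q) (d₂ (q+1)) := by
          rcases hd₂R q with h | h
          · exact absurd h.symm hC
          · exact h
        rw [← hpq] at hcov2
        have heq : d₁ (p+1) = d₂ (q+1) :=
          cover_unique hcov1 hcov2 (hd₁le _) (hd₂le _)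
        rw [hfv]
        exact ⟨Or.inr rfl, Or.inr rfl, heq, by omega, fun _ => hq⟩
  set pq : ℕ → ℕ × ℕ := fun n => f^[n] (0, 0) with hpq
  have hpq0 : pq 0 = (0, 0) := rfl
  have hpqs : ∀ n, pq (n+1) = f (pq n) := fun n => by
    rw [hpq]; simp [Function.iterate_succ_apply']
  -- invariants
  have hinv : ∀ n, d₁ (pq n).1 = d₂ (pq n).2 ∧ (pq n).2 ≤ m₂ ∧ n ≤ (pq n).1 + (pq n).2 := by
    intro n
    induction n with
    | zero =>
      refine ⟨?_, by simp [hpq0], by simp [hpq0]⟩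
      rw [hpq0]
      simp only [hd₁, hd₂, hu₁.1, hu₂.1, h₁.root, h₂.root]
    | succ n ih =>
      obtain ⟨hi1, hi2, hi3⟩ := ih
      obtain ⟨hp, hq, hd, hsum, hqm⟩ := hfstep (pq n) hi1
      rw [hpqs n]
      refine ⟨hd, ?_, by omega⟩
      rcases hq with h | h
      · rw [h]; exact hi2
      · rw [h]
        exact hqm h
  have hmono : ∀ n, (pq n).1 ≤ (pq (n+1)).1 := by
    intro n
    obtain ⟨hp, _, _, _, _⟩ := hfstep (pq n) (hinv n).1
    rw [hpqs n]
    rcases hp with h | h <;> omega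
  have hmono' : ∀ n m, n ≤ m → (pq n).1 ≤ (pq m).1 := by
    intro n m hnm
    induction m with
    | zero => rw [Nat.le_zero.mp hnm]
    | succ m ihm =>
      rcases Nat.lt_or_ge n (m+1) with h | h
      · exact le_trans (ihm (Nat.lt_succ_iff.mp h)) (hmono m)
      · rw [le_antisymm hnm h]
  -- the combined walks
  refine ⟨fun n => u₁ (pq n).1, fun n => u₂ (pq n).2, m₁ + m₂, ⟨?_, ?_⟩, ⟨?_, ?_⟩, ?_, ?_⟩
  · show u₁ (pq 0).1 = B₁.root
    rw [hpq0]; exact hu₁.1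
  · intro i
    obtain ⟨hp, _, _, _, _⟩ := hfstep (pq i) (hinv i).1
    show B₁.R (u₁ (pq i).1) (u₁ (pq (i+1)).1)
    rw [hpqs i]
    rcases hp with h | h
    · rw [h]; exact B₁.R_refl _
    · rw [h]; exact hu₁.2 _
  · show u₂ (pq 0).2 = B₂.root
    rw [hpq0]; exact hu₂.1
  · intro i
    obtain ⟨_, hq, _, _, _⟩ := hfstep (pq i) (hinv i).1
    show B₂.R (u₂ (pq i).2) (u₂ (pq (i+1)).2)
    rw [hpqs i]
    rcases hq with h | h
    · rw [h]; exact B₂.R_refl _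
    · rw [h]; exact hu₂.2 _
  · intro i; exact (hinv i).1
  · intro m hm
    have h3 := (hinv m).2.2
    have h2 := (hinv m).2.1
    have hp1 : m₁ ≤ (pq m).1 := by omega
    exact hu₁top _ hp1

/-- Order on the comb fan: root `none` below everything, chains `(s, ·)`. -/
def cle {S : Type} {N : ℕ} : Option (S × Fin (N+1)) → Option (S × Fin (N+1)) → Prop
  | none, _ => True
  | some _, none => False
  | some p, some q => p.1 = q.1 ∧ p.2 ≤ q.2

lemma cle_none {S : Type} {N : ℕ} (x : Option (S × Fin (N+1))) : cle none x := trivial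

lemma cle_some_none {S : Type} {N : ℕ} (p : S × Fin (N+1)) : ¬ cle (some p) none := id

lemma cle_some_some {S : Type} {N : ℕ} (p q : S × Fin (N+1)) :
    cle (some p) (some q) ↔ p.1 = q.1 ∧ p.2 ≤ q.2 := Iff.rfl

/-- The comb fan: a root with `|S|` disjoint chains of length `N+1` above it. -/
def combFan (S : Type) [Fintype S] (N : ℕ) : FiniteFan where
  carrier := Option (S × Fin (N+1))
  fintype := inferInstance
  ord :=
    { le := cle
      le_refl := fun x => by cases x with
        | none => trivial
        | some p => exact ⟨rfl, le_refl _⟩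
      le_trans := fun x y z hxy hyz => by
        cases x with
        | none => trivial
        | some p => cases y with
          | none => exact absurd hxy (cle_some_none p)
          | some q => cases z with
            | none => exact absurd hyz (cle_some_none q)
            | some r => exact ⟨hxy.1.trans hyz.1, le_trans hxy.2 hyz.2⟩
      le_antisymm := fun x y hxy hyx => by
        cases x with
        | none => cases y with
          | none => rfl
          | some q => exact absurd hyx (cle_some_none q)
        | some p => cases y with
          | none => exact absurd hxy (cle_some_none p)
          | some q =>
            congr 1
            exact Prod.ext hxy.1 (le_antisymm hxy.2 hyx.2) }
  root := none
  root_le := fun a => cle_none a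
  down_chain := by
    intro a x y hx hy
    cases x with
    | none => exact Or.inl (cle_none y)
    | some p => cases y with
      | none => exact Or.inr (cle_none _)
      | some q =>
        cases a with
        | none => exact absurd hx (cle_some_none p)
        | some r =>
          have h1 : p.1 = q.1 := hx.1.trans hy.1.symm
          rcases le_total p.2 q.2 with h | h
          · exact Or.inl ⟨h1, h⟩
          · exact Or.inr ⟨h1.symm, h⟩
  up_chain := by
    intro a ha x y hx hy
    cases a with
    | none => exact absurd rfl ha
    | some r =>
      cases x with
      | none => exact absurd hx (cle_some_none r)
      | some p =>
        cases y with
        | none => exact absurd hy (cle_some_none r)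
        | some q =>
          have h1 : p.1 = q.1 := hx.1.symm.trans hy.1
          rcases le_total p.2 q.2 with h | h
          · exact Or.inl ⟨h1, h⟩
          · exact Or.inr ⟨h1.symm, h⟩

lemma combFan_lt {S : Type} [Fintype S] {N : ℕ} (x y : (combFan S N).carrier) :
    (combFan S N).ord.lt x y ↔ cle x y ∧ x ≠ y := by
  constructor
  · intro h
    refine ⟨h.1, fun he => ?_⟩
    have := h.2
    rw [he] at this h
    exact this h.1
  · intro ⟨h1, h2⟩
    exact ⟨h1, fun h => h2 ((combFan S N).ord.le_antisymm _ _ h1 h)⟩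

/-- Characterization of covers in the comb fan from the root. -/
lemma combFan_covby_none {S : Type} [Fintype S] {N : ℕ} (p : S × Fin (N+1))
    (h : (combFan S N).covby none (some p)) : p.2 = 0 := by
  by_contra hne
  have h0 : (0 : Fin (N+1)) < p.2 := by
    rcases Fin.eq_zero_or_eq_succ p.2 with h | ⟨j, hj⟩
    · exact absurd h hne
    · rw [hj]; exact Fin.succ_pos j
  have hlt1 : (combFan S N).ord.lt none (some (p.1, 0)) := by
    refine (combFan_lt (S := S) (N := N) _ _).mpr ?_; exact ⟨trivial, fun h => by cases h⟩
  have hlt2 : (combFan S N).ord.lt (some (p.1, 0)) (some p) := by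
    refine (combFan_lt (S := S) (N := N) _ _).mpr ?_
    refine ⟨⟨rfl, le_of_lt h0⟩, fun he => ?_⟩
    have := congrArg (fun o => Option.map Prod.snd o) he
    simp at this
    rw [← this] at h0
    exact lt_irrefl _ h0
  exact h.2 _ hlt1 hlt2

/-- Characterization of covers in the comb fan within a chain. -/
lemma combFan_covby_some {S : Type} [Fintype S] {N : ℕ} (p q : S × Fin (N+1))
    (h : (combFan S N).covby (some p) (some q)) : p.1 = q.1 ∧ (q.2 : ℕ) = (p.2 : ℕ) + 1 := by
  have hlt := h.1
  replace hlt := (combFan_lt (S := S) (N := N) _ _).mp hlt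
  obtain ⟨⟨h1, h2⟩, hne⟩ := hlt
  have hne2 : p.2 ≠ q.2 := by
    intro he
    exact hne (by rw [Prod.ext h1 he])
  have hlt2 : (p.2 : ℕ) < (q.2 : ℕ) := lt_of_le_of_ne h2 (fun hc => hne2 (Fin.ext hc))
  refine ⟨h1, ?_⟩
  by_contra hc
  have hlt3 : (p.2 : ℕ) + 1 < (q.2 : ℕ) := by omega
  have hvalid : (p.2 : ℕ) + 1 < N + 1 := lt_trans hlt3 q.2.isLt
  set mid : S × Fin (N+1) := (p.1, ⟨(p.2 : ℕ) + 1, hvalid⟩) with hmid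
  have hm1 : (combFan S N).ord.lt (some p) (some mid) := by
    refine (combFan_lt (S := S) (N := N) _ _).mpr ?_
    refine ⟨⟨rfl, ?_⟩, fun he => ?_⟩
    · show p.2 ≤ (⟨(p.2 : ℕ) + 1, hvalid⟩ : Fin (N+1))
      rw [Fin.le_def]; simp
    · have := congrArg (fun o => Option.map (fun r => (r.2 : ℕ)) o) he
      simp [hmid] at this
  have hm2 : (combFan S N).ord.lt (some mid) (some q) := by
    refine (combFan_lt (S := S) (N := N) _ _).mpr ?_
    refine ⟨⟨h1, ?_⟩, fun he => ?_⟩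
    · rw [Fin.le_def]; exact le_of_lt hlt3
    · have := congrArg (fun o => Option.map (fun r => (r.2 : ℕ)) o) he
      simp [hmid] at this
      omega
  exact h.2 _ hm1 hm2

/-- The canonical epimorphism from a comb fan given a family of walks. -/
lemma combFan_epi {S : Type} [Fintype S] {N : ℕ} (B : FiniteFan)
    (w : S → ℕ → B.carrier) (hw : ∀ s, Walk B (w s))
    (hsurj : ∀ b : B.carrier, ∃ s, w s (N+1) = b) :
    FanEpi (combFan S N) B
      (fun x => x.elim B.root (fun p => w p.1 ((p.2 : ℕ) + 1))) := by
  constructor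
  · intro b
    obtain ⟨s, hs⟩ := hsurj b
    exact ⟨some (s, ⟨N, by omega⟩), hs⟩
  · rintro x y (rfl | hcov)
    · exact B.R_refl _
    cases x with
    | none =>
      cases y with
      | none =>
        have := hcov.1
        replace this := (combFan_lt (S := S) (N := N) _ _).mp this
        exact absurd rfl this.2
      | some p =>
        have h0 := combFan_covby_none p hcov
        simp only [Option.elim]
        rw [h0]
        have := (hw p.1).2 0
        rw [(hw p.1).1] at this
        simpa using this
    | some p =>
      cases y with
      | none => exact absurd (hcov.1).1 (cle_some_none p)
      | some q =>
        obtain ⟨h1, h2⟩ := combFan_covby_some p q hcov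
        simp only [Option.elim]
        rw [← h1, h2]
        exact (hw p.1).2 _

/-- The amalgamation property for finite fans. -/
lemma fan_AP (A B₁ B₂ : FiniteFan) (φ₁ : B₁.carrier → A.carrier) (φ₂ : B₂.carrier → A.carrier)
    (h₁ : FanEpi B₁ A φ₁) (h₂ : FanEpi B₂ A φ₂) :
    ∃ (C : FiniteFan) (ψ₁ : C.carrier → B₁.carrier) (ψ₂ : C.carrier → B₂.carrier),
      FanEpi C B₁ ψ₁ ∧ FanEpi C B₂ ψ₂ ∧ φ₁ ∘ ψ₁ = φ₂ ∘ ψ₂ := by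
  have H : ∀ s : B₁.carrier ⊕ B₂.carrier,
      ∃ (w₁ : ℕ → B₁.carrier) (w₂ : ℕ → B₂.carrier) (n : ℕ),
        Walk B₁ w₁ ∧ Walk B₂ w₂ ∧ (∀ i, φ₁ (w₁ i) = φ₂ (w₂ i)) ∧
        (∀ m, n ≤ m → Sum.elim (fun b => w₁ m = b) (fun b => w₂ m = b) s) := by
    intro s
    cases s with
    | inl b =>
      obtain ⟨w₁, w₂, n, hw₁, hw₂, heq, hre⟩ := sync A B₁ B₂ φ₁ φ₂ h₁ h₂ b
      exact ⟨w₁, w₂, n, hw₁, hw₂, heq, fun m hm => hre m hm⟩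
    | inr b =>
      obtain ⟨w₂, w₁, n, hw₂, hw₁, heq, hre⟩ := sync A B₂ B₁ φ₂ φ₁ h₂ h₁ b
      exact ⟨w₁, w₂, n, hw₁, hw₂, fun i => (heq i).symm, fun m hm => hre m hm⟩
  choose W₁ W₂ n hW₁ hW₂ heq hre using H
  set N : ℕ := Finset.univ.sup n with hN
  have hnN : ∀ s, n s ≤ N + 1 := fun s =>
    le_trans (Finset.le_sup (Finset.mem_univ s)) (Nat.le_succ N)
  refine ⟨combFan (B₁.carrier ⊕ B₂.carrier) N,
    fun x => x.elim B₁.root (fun p => W₁ p.1 ((p.2 : ℕ) + 1)),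
    fun x => x.elim B₂.root (fun p => W₂ p.1 ((p.2 : ℕ) + 1)), ?_, ?_, ?_⟩
  · exact combFan_epi B₁ W₁ hW₁ (fun b => ⟨Sum.inl b, hre (Sum.inl b) (N+1) (hnN _)⟩)
  · exact combFan_epi B₂ W₂ hW₂ (fun b => ⟨Sum.inr b, hre (Sum.inr b) (N+1) (hnN _)⟩)
  · funext x
    cases x with
    | none =>
      show φ₁ B₁.root = φ₂ B₂.root
      rw [h₁.root, h₂.root]
    | some p =>
      exact heq p.1 _

/-- The one point fan. -/
def onePt : FiniteFan where
  carrier := PUnit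
  fintype := inferInstance
  ord := inferInstance
  root := PUnit.unit
  root_le := fun a => le_of_eq (Subsingleton.elim _ _)
  down_chain := fun _ x y _ _ => Or.inl (le_of_eq (Subsingleton.elim _ _))
  up_chain := fun _ _ x y _ _ => Or.inl (le_of_eq (Subsingleton.elim _ _))

lemma epi_onePt (A : FiniteFan) : FanEpi A onePt (fun _ => PUnit.unit) :=
  ⟨fun u => ⟨A.root, rfl⟩, fun _ _ _ => Or.inl rfl⟩



/-- The class of finite fans with epimorphisms has the JPP and the AP. -/
theorem stmt_5 :
    (∀ A B : FiniteFan,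
      ∃ (C : FiniteFan) (φ : C.carrier → A.carrier) (ψ : C.carrier → B.carrier),
        FanEpi C A φ ∧ FanEpi C B ψ) ∧
    (∀ (A B₁ B₂ : FiniteFan) (φ₁ : B₁.carrier → A.carrier) (φ₂ : B₂.carrier → A.carrier),
      FanEpi B₁ A φ₁ → FanEpi B₂ A φ₂ →
      ∃ (C : FiniteFan) (ψ₁ : C.carrier → B₁.carrier) (ψ₂ : C.carrier → B₂.carrier),
        FanEpi C B₁ ψ₁ ∧ FanEpi C B₂ ψ₂ ∧ φ₁ ∘ ψ₁ = φ₂ ∘ ψ₂) := by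
  constructor
  · intro A B
    obtain ⟨C, ψ₁, ψ₂, hψ₁, hψ₂, _⟩ :=
      fan_AP onePt A B (fun _ => PUnit.unit) (fun _ => PUnit.unit) (epi_onePt A) (epi_onePt B)
    exact ⟨C, ψ₁, ψ₂, hψ₁, hψ₂⟩
  · exact fun A B₁ B₂ φ₁ φ₂ h₁ h₂ => fan_AP A B₁ B₂ φ₁ φ₂ h₁ h₂
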